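/- Let m, n ≥ 1 and let B¹,…,Bⁿ be m×m real matrices, each skew-symmetric and orthogonal, with BⁱBʲ = −BʲBⁱ for i ≠ j; set Q = m+2n. Let φ(x,t) = ‖x‖⁴ + 16‖t‖² and let A = (a_{ij}) be a symmetric matrix-valued function with ⟨A(p)ξ,ξ⟩ ≤ Λ‖ξ‖² for all ξ ∈ ℝᵐ. Then for every p = (x,t), L_A φ(p) = 4‖x‖² Tr(A(p)) + 8⟨A(p)x, x⟩ + 8Σ_{k=1}^n ⟨A(p)Bᵏx, Bᵏx⟩ ≤ 4Λ(m+2+2n)‖x‖²; in particular L_A φ(p) ≤ 4(Q+2)Λ for every p in the unit d-ball B₁(0) = {(x,t) : ‖x‖⁴+16‖t‖² < 1}. -/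

import Mathlib

open Matrix MeasureTheory
open scoped BigOperators

noncomputable section

/-- The underlying space of the prototype H-type group: `ℝᵐ × ℝⁿ`. -/
abbrev G (m n : ℕ) : Type := (Fin m → ℝ) × (Fin n → ℝ)

/-- Squared Euclidean norm on `ℝᵏ`. -/
def sqnorm {k : ℕ} (x : Fin k → ℝ) : ℝ := ∑ i, x i ^ 2

/-- The homogeneous norm `d(x,t) = (‖x‖⁴ + 16‖t‖²)^(1/4)`. -/
def hnorm {m n : ℕ} (p : G m n) : ℝ := (sqnorm p.1 ^ 2 + 16 * sqnorm p.2) ^ (4⁻¹ : ℝ)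

/-- The group law `(x,t)∘(y,s) = (x+y, t+s+½⟨Bᵏx,y⟩)`. -/
def gmul {m n : ℕ} (B : Fin n → Matrix (Fin m) (Fin m) ℝ) (p q : G m n) : G m n :=
  (p.1 + q.1, fun k => p.2 k + q.2 k + (1 / 2) * ((B k).mulVec p.1 ⬝ᵥ q.1))

/-- The group inverse `p⁻¹ = -p`. -/
def ginv {m n : ℕ} (p : G m n) : G m n := (-p.1, -p.2)

/-- The `d`-ball `B_R(p) = {q : d(p⁻¹∘q) < R}`. -/
def dball {m n : ℕ} (B : Fin n → Matrix (Fin m) (Fin m) ℝ) (p : G m n) (R : ℝ) :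
    Set (G m n) := {q | hnorm (gmul B (ginv p) q) < R}

/-- The vector of the horizontal field `X_j` at `p`:
`X_j = ∂_{x_j} + ½ Σ_k (Bᵏx)_j ∂_{t_k}`. -/
def Xvec {m n : ℕ} (B : Fin n → Matrix (Fin m) (Fin m) ℝ) (j : Fin m) (p : G m n) : G m n :=
  (fun i => if i = j then 1 else 0, fun k => (1 / 2) * (B k).mulVec p.1 j)

/-- The horizontal derivative `X_j u (p)`. -/
def Xop {m n : ℕ} (B : Fin n → Matrix (Fin m) (Fin m) ℝ) (j : Fin m) (u : G m n → ℝ)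
    (p : G m n) : ℝ := fderiv ℝ u p (Xvec B j p)

/-- The horizontally elliptic operator `L_A u = Σ_{i,j} a_{ij} X_i X_j u`. -/
def Lop {m n : ℕ} (B : Fin n → Matrix (Fin m) (Fin m) ℝ)
    (A : G m n → Matrix (Fin m) (Fin m) ℝ) (u : G m n → ℝ) (p : G m n) : ℝ :=
  ∑ i, ∑ j, A p i j * Xop B i (Xop B j u) p

/-- The defining conditions on the matrices `B¹,…,Bⁿ` of a prototype H-type group:
skew-symmetric, orthogonal, pairwise anticommuting. -/
def HTypeData {m n : ℕ} (B : Fin n → Matrix (Fin m) (Fin m) ℝ) : Prop :=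
  (∀ k, (B k)ᵀ = -(B k)) ∧ (∀ k, (B k)ᵀ * B k = 1) ∧
    (∀ i j, i ≠ j → B i * B j = -(B j * B i))

/-- The quadratic form `⟨Aξ, ξ⟩`. -/
def quadForm {m : ℕ} (A : Matrix (Fin m) (Fin m) ℝ) (ξ : Fin m → ℝ) : ℝ :=
  A.mulVec ξ ⬝ᵥ ξ

/-- Uniform ellipticity: `λ‖ξ‖² ≤ ⟨Aξ,ξ⟩ ≤ Λ‖ξ‖²`. -/
def UnifElliptic {m : ℕ} (lam Lam : ℝ) (A : Matrix (Fin m) (Fin m) ℝ) : Prop :=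
  ∀ ξ : Fin m → ℝ, lam * sqnorm ξ ≤ quadForm A ξ ∧ quadForm A ξ ≤ Lam * sqnorm ξ

/-- The δ-Landis condition
`Tr(A) + (Q+2−m)·max_{‖ξ‖=1}⟨Aξ,ξ⟩ ≤ (Q+4−δ)·min_{‖ξ‖=1}⟨Aξ,ξ⟩`,
stated equivalently via universal quantification over unit vectors. -/
def Landis {m : ℕ} (Q δ : ℝ) (A : Matrix (Fin m) (Fin m) ℝ) : Prop :=
  ∀ ξ ζ : Fin m → ℝ, sqnorm ξ = 1 → sqnorm ζ = 1 →
    A.trace + (Q + 2 - m) * quadForm A ξ ≤ (Q + 4 - δ) * quadForm A ζ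

/-- `φ = d⁴`. -/
def phi {m n : ℕ} (p : G m n) : ℝ := sqnorm p.1 ^ 2 + 16 * sqnorm p.2



-- ===== auxiliary lemmas =====

lemma hasFDerivAt_sqnorm {k : ℕ} (x : Fin k → ℝ) :
    HasFDerivAt sqnorm (∑ i, (2 * x i) • (ContinuousLinearMap.proj (R := ℝ) (φ := fun _ : Fin k => ℝ) i)) x := by
  have : ∀ i : Fin k, HasFDerivAt (fun x : Fin k → ℝ => x i ^ 2)
      ((2 * x i) • (ContinuousLinearMap.proj (R := ℝ) (φ := fun _ : Fin k => ℝ) i)) x := by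
    intro i
    have hp := (ContinuousLinearMap.proj (R := ℝ) (φ := fun _ : Fin k => ℝ) i).hasFDerivAt (x := x)
    have h := hp.fun_mul hp
    refine (h.congr_fderiv ?_).congr_of_eventuallyEq (Filter.Eventually.of_forall fun y => ?_)
    · ext v; simp [ContinuousLinearMap.proj_apply]; ring
    · simp [ContinuousLinearMap.proj_apply, sq]
  exact HasFDerivAt.fun_sum (fun i _ => this i)

lemma hasFDerivAt_sq1 {m n : ℕ} (p : G m n) :
    HasFDerivAt (fun p : G m n => sqnorm p.1)
      ((∑ i, (2 * p.1 i) • (ContinuousLinearMap.proj (R := ℝ) (φ := fun _ : Fin m => ℝ) i)).comp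
        (ContinuousLinearMap.fst ℝ (Fin m → ℝ) (Fin n → ℝ))) p :=
  (hasFDerivAt_sqnorm p.1).comp p (hasFDerivAt_fst)

lemma hasFDerivAt_sq2 {m n : ℕ} (p : G m n) :
    HasFDerivAt (fun p : G m n => sqnorm p.2)
      ((∑ i, (2 * p.2 i) • (ContinuousLinearMap.proj (R := ℝ) (φ := fun _ : Fin n => ℝ) i)).comp
        (ContinuousLinearMap.snd ℝ (Fin m → ℝ) (Fin n → ℝ))) p :=
  (hasFDerivAt_sqnorm p.2).comp p (hasFDerivAt_snd)

/-- coordinates as continuous linear maps -/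
def c1 (m n : ℕ) (l : Fin m) : G m n →L[ℝ] ℝ :=
  (ContinuousLinearMap.proj (R := ℝ) (φ := fun _ : Fin m => ℝ) l).comp
    (ContinuousLinearMap.fst ℝ (Fin m → ℝ) (Fin n → ℝ))

def c2 (m n : ℕ) (k : Fin n) : G m n →L[ℝ] ℝ :=
  (ContinuousLinearMap.proj (R := ℝ) (φ := fun _ : Fin n => ℝ) k).comp
    (ContinuousLinearMap.snd ℝ (Fin m → ℝ) (Fin n → ℝ))

lemma hasFDerivAt_c1 {m n : ℕ} (l : Fin m) (p : G m n) :
    HasFDerivAt (fun p : G m n => p.1 l) (c1 m n l) p := (c1 m n l).hasFDerivAt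

lemma hasFDerivAt_c2 {m n : ℕ} (k : Fin n) (p : G m n) :
    HasFDerivAt (fun p : G m n => p.2 k) (c2 m n k) p := (c2 m n k).hasFDerivAt

lemma hasFDerivAt_mulVecG {m n : ℕ} (M : Matrix (Fin m) (Fin m) ℝ) (j : Fin m) (p : G m n) :
    HasFDerivAt (fun p : G m n => M.mulVec p.1 j) (∑ l, (M j l) • c1 m n l) p := by
  have : ∀ l : Fin m, HasFDerivAt (fun p : G m n => M j l * p.1 l) ((M j l) • c1 m n l) p :=
    fun l => (hasFDerivAt_c1 l p).const_mul _
  have h := HasFDerivAt.fun_sum (fun l (_ : l ∈ Finset.univ) => this l)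
  simpa [mulVec, dotProduct] using h

lemma Xop_phi {m n : ℕ} (B : Fin n → Matrix (Fin m) (Fin m) ℝ) (j : Fin m) (p : G m n) :
    Xop B j phi p = 4 * sqnorm p.1 * p.1 j + 16 * ∑ k, p.2 k * (B k).mulVec p.1 j := by
  have h1 := hasFDerivAt_sq1 p
  have h2 := h1.fun_mul h1
  have h3 := (hasFDerivAt_sq2 p).const_mul (16 : ℝ)
  have ephi : phi = fun p : G m n => (sqnorm p.1 * sqnorm p.1) + 16 * sqnorm p.2 := by
    funext q; simp [phi]; ring
  have H := h2.fun_add h3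
  rw [Xop, ephi, H.fderiv]
  simp [Xvec, ContinuousLinearMap.sum_apply, ContinuousLinearMap.proj_apply,
    Finset.sum_ite_eq', Finset.mul_sum, mulVec]
  congr 1
  · ring
  · exact Finset.sum_congr rfl fun x _ => by ring

lemma Xop_Xop_phi {m n : ℕ} (B : Fin n → Matrix (Fin m) (Fin m) ℝ) (i j : Fin m) (p : G m n) :
    Xop B i (Xop B j phi) p =
      8 * p.1 i * p.1 j + (if j = i then 4 * sqnorm p.1 else 0)
        + 8 * ∑ k, (B k).mulVec p.1 i * (B k).mulVec p.1 j
        + 16 * ∑ k, p.2 k * B k j i := by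
  have hg : Xop B j phi = fun p : G m n =>
      4 * sqnorm p.1 * p.1 j + 16 * ∑ k, p.2 k * (B k).mulVec p.1 j := by
    funext q; exact Xop_phi B j q
  have h1 : HasFDerivAt (fun p : G m n => 4 * sqnorm p.1 * p.1 j) _ p :=
    (((hasFDerivAt_sq1 p).const_mul (4:ℝ)).mul (hasFDerivAt_c1 j p))
  have h2 : ∀ k : Fin n, HasFDerivAt (fun p : G m n => p.2 k * (B k).mulVec p.1 j) _ p :=
    fun k => (hasFDerivAt_c2 k p).mul (hasFDerivAt_mulVecG (B k) j p)
  have h3 := (HasFDerivAt.fun_sum (fun k (_ : k ∈ Finset.univ) => h2 k)).const_mul (16:ℝ)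
  have H := h1.fun_add h3
  rw [Xop, hg, H.fderiv]
  simp [Xvec, c1, c2, ContinuousLinearMap.sum_apply, ContinuousLinearMap.proj_apply,
    Finset.sum_ite_eq', Finset.mul_sum, mulVec, dotProduct, Finset.sum_ite_eq]
  have key : ∀ k : Fin n,
      (16:ℝ) * (p.2 k * B k j i + ∑ l, (∑ x, B k j x * p.1 x) * (2⁻¹ * (B k i l * p.1 l)))
        = (∑ l, 8 * ((∑ x, B k i x * p.1 x) * (B k j l * p.1 l))) + 16 * (p.2 k * B k j i) := by
    intro k
    have e1 : (∑ l, (∑ x, B k j x * p.1 x) * (2⁻¹ * (B k i l * p.1 l)))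
        = (∑ x, B k j x * p.1 x) * (2⁻¹ * ∑ l, B k i l * p.1 l) := by
      rw [Finset.mul_sum, Finset.mul_sum]
      try exact Finset.sum_congr rfl fun l _ => by ring
    have e2 : (∑ l, 8 * ((∑ x, B k i x * p.1 x) * (B k j l * p.1 l)))
        = 8 * ((∑ x, B k i x * p.1 x) * ∑ l, B k j l * p.1 l) := by
      rw [Finset.mul_sum, Finset.mul_sum]
      try exact Finset.sum_congr rfl fun l _ => by ring
    rw [e1, e2]; ring
  simp only [key]
  rw [Finset.sum_add_distrib]
  ring

lemma quadForm_expand {m : ℕ} (A : Matrix (Fin m) (Fin m) ℝ) (y : Fin m → ℝ) :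
    quadForm A y = ∑ i, ∑ j, A i j * y j * y i := by
  simp [quadForm, mulVec, dotProduct, Finset.sum_mul]

lemma sqnorm_mulVec {m : ℕ} (M : Matrix (Fin m) (Fin m) ℝ) (h : Mᵀ * M = 1)
    (x : Fin m → ℝ) : sqnorm (M.mulVec x) = sqnorm x := by
  have h1 : ∀ k : ℕ, ∀ y : Fin k → ℝ, sqnorm y = y ⬝ᵥ y := by
    intro k y; simp [sqnorm, dotProduct, sq]
  rw [h1, h1]
  rw [Matrix.dotProduct_mulVec, ← Matrix.mulVec_transpose, Matrix.mulVec_mulVec, h,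
    Matrix.one_mulVec]

lemma trace_mul_skew_eq_zero {m : ℕ} (A M : Matrix (Fin m) (Fin m) ℝ)
    (hA : A.IsSymm) (hM : Mᵀ = -M) : (A * M).trace = 0 := by
  have h1 : (A * M).trace = ((A * M)ᵀ).trace := (Matrix.trace_transpose _).symm
  rw [Matrix.transpose_mul, hM, hA.eq, Matrix.neg_mul, Matrix.trace_neg,
    Matrix.trace_mul_comm] at h1
  have h2 := Matrix.trace_mul_comm A M
  linarith

lemma quadForm_diag {m : ℕ} (A : Matrix (Fin m) (Fin m) ℝ) (i : Fin m) :
    quadForm A (fun l => if l = i then 1 else 0) = A i i := by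
  simp [quadForm, mulVec, dotProduct, Finset.sum_ite_eq']

lemma sqnorm_basis {m : ℕ} (i : Fin m) :
    sqnorm (fun l => if l = i then (1:ℝ) else 0) = 1 := by
  simp [sqnorm, apply_ite (· ^ 2), Finset.sum_ite_eq']

lemma trace_le {m : ℕ} (A : Matrix (Fin m) (Fin m) ℝ) (Lam : ℝ)
    (h : ∀ ξ, quadForm A ξ ≤ Lam * sqnorm ξ) : A.trace ≤ m * Lam := by
  have hd : ∀ i, A i i ≤ Lam := by
    intro i
    have := h (fun l => if l = i then 1 else 0)
    rwa [quadForm_diag, sqnorm_basis, mul_one] at this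
  calc A.trace = ∑ i, A i i := rfl
    _ ≤ ∑ _i : Fin m, Lam := Finset.sum_le_sum fun i _ => hd i
    _ = m * Lam := by simp [Finset.sum_const, mul_comm]

lemma sqnorm_nonneg {k : ℕ} (x : Fin k → ℝ) : 0 ≤ sqnorm x :=
  Finset.sum_nonneg fun i _ => sq_nonneg _

lemma Lop_phi_eq {m n : ℕ} (B : Fin n → Matrix (Fin m) (Fin m) ℝ) (hB : HTypeData B)
    (A : G m n → Matrix (Fin m) (Fin m) ℝ) (hsymm : ∀ p, (A p).IsSymm) (p : G m n) :
    Lop B A phi p = 4 * sqnorm p.1 * (A p).trace + 8 * quadForm (A p) p.1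
      + 8 * ∑ k, quadForm (A p) ((B k).mulVec p.1) := by
  have step1 : Lop B A phi p =
      ((∑ i, ∑ j, A p i j * (8 * p.1 i * p.1 j))
        + (∑ i, ∑ j, A p i j * (if j = i then 4 * sqnorm p.1 else 0))
        + (∑ i, ∑ j, A p i j * (8 * ∑ k, (B k).mulVec p.1 i * (B k).mulVec p.1 j)))
        + (∑ i, ∑ j, A p i j * (16 * ∑ k, p.2 k * B k j i)) := by
    rw [Lop]
    simp only [Xop_Xop_phi, mul_add, Finset.sum_add_distrib]
  have P1 : (∑ i, ∑ j, A p i j * (8 * p.1 i * p.1 j)) = 8 * quadForm (A p) p.1 := by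
    rw [quadForm_expand, Finset.mul_sum]
    refine Finset.sum_congr rfl fun i _ => ?_
    rw [Finset.mul_sum]
    exact Finset.sum_congr rfl fun j _ => by ring
  have P2 : (∑ i, ∑ j, A p i j * (if j = i then 4 * sqnorm p.1 else 0))
      = 4 * sqnorm p.1 * (A p).trace := by
    have e : ∀ i : Fin m, (∑ j, A p i j * (if j = i then 4 * sqnorm p.1 else 0))
        = A p i i * (4 * sqnorm p.1) := by
      intro i
      rw [Finset.sum_eq_single i]
      · simp
      · intro b _ hb; simp [hb]
      · intro h; exact absurd (Finset.mem_univ i) h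
    simp only [e]
    rw [Matrix.trace, Finset.mul_sum]
    exact Finset.sum_congr rfl fun i _ => by simp [Matrix.diag]; ring
  have P3 : (∑ i, ∑ j, A p i j * (8 * ∑ k, (B k).mulVec p.1 i * (B k).mulVec p.1 j))
      = 8 * ∑ k, quadForm (A p) ((B k).mulVec p.1) := by
    have e : ∀ i j, A p i j * (8 * ∑ k, (B k).mulVec p.1 i * (B k).mulVec p.1 j)
        = ∑ k, 8 * (A p i j * (B k).mulVec p.1 j * (B k).mulVec p.1 i) := by
      intro i j; rw [Finset.mul_sum, Finset.mul_sum]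
      exact Finset.sum_congr rfl fun k _ => by ring
    simp only [e]
    rw [show (∑ i, ∑ j, ∑ k, 8 * (A p i j * (B k).mulVec p.1 j * (B k).mulVec p.1 i))
        = ∑ i, ∑ k, ∑ j, 8 * (A p i j * (B k).mulVec p.1 j * (B k).mulVec p.1 i)
        from Finset.sum_congr rfl (fun i _ => Finset.sum_comm), Finset.sum_comm,
      Finset.mul_sum]
    refine Finset.sum_congr rfl fun k _ => ?_
    rw [quadForm_expand, Finset.mul_sum]
    refine Finset.sum_congr rfl fun i _ => ?_
    rw [Finset.mul_sum]
    try exact Finset.sum_congr rfl fun j _ => by ring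
  have P4 : (∑ i, ∑ j, A p i j * (16 * ∑ k, p.2 k * B k j i)) = 0 := by
    have htr : ∀ k, (∑ i, ∑ j, A p i j * B k j i) = 0 := by
      intro k
      have h0 := trace_mul_skew_eq_zero (A p) (B k) (hsymm p) (hB.1 k)
      have h1 : (A p * B k).trace = ∑ i, ∑ j, A p i j * B k j i := by
        simp [Matrix.trace, Matrix.diag, Matrix.mul_apply]
      rw [← h1]; exact h0
    have e : ∀ i j, A p i j * (16 * ∑ k, p.2 k * B k j i)
        = ∑ k, (16 * p.2 k) * (A p i j * B k j i) := by
      intro i j; rw [Finset.mul_sum, Finset.mul_sum]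
      exact Finset.sum_congr rfl fun k _ => by ring
    simp only [e]
    rw [show (∑ i, ∑ j, ∑ k, (16 * p.2 k) * (A p i j * B k j i))
        = ∑ i, ∑ k, ∑ j, (16 * p.2 k) * (A p i j * B k j i)
        from Finset.sum_congr rfl (fun i _ => Finset.sum_comm), Finset.sum_comm]
    refine Finset.sum_eq_zero fun k _ => ?_
    have e2 : (∑ i, ∑ j, (16 * p.2 k) * (A p i j * B k j i))
        = (16 * p.2 k) * ∑ i, ∑ j, A p i j * B k j i := by
      rw [Finset.mul_sum]
      exact Finset.sum_congr rfl fun i _ => (Finset.mul_sum _ _ _).symm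
    rw [e2, htr k, mul_zero]
  rw [step1, P1, P2, P3, P4]
  ring

/-- For `φ(x,t) = ‖x‖⁴ + 16‖t‖²` and symmetric `A` with
`⟨A(p)ξ,ξ⟩ ≤ Λ‖ξ‖²`:
`L_A φ(p) = 4‖x‖²Tr(A(p)) + 8⟨A(p)x,x⟩ + 8Σ_k⟨A(p)Bᵏx,Bᵏx⟩ ≤ 4Λ(m+2+2n)‖x‖²`,
and `L_A φ(p) ≤ 4(Q+2)Λ` on the unit `d`-ball. -/
theorem Lop_phi_formula_and_bound
    (m n : ℕ) (hm : 1 ≤ m) (hn : 1 ≤ n)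
    (B : Fin n → Matrix (Fin m) (Fin m) ℝ) (hB : HTypeData B)
    (Lam : ℝ) (hLam : 0 < Lam)
    (A : G m n → Matrix (Fin m) (Fin m) ℝ) (hsymm : ∀ p, (A p).IsSymm)
    (hupper : ∀ p ξ, quadForm (A p) ξ ≤ Lam * sqnorm ξ) :
    ∀ p : G m n,
      Lop B A phi p =
          4 * sqnorm p.1 * (A p).trace + 8 * quadForm (A p) p.1
            + 8 * ∑ k, quadForm (A p) ((B k).mulVec p.1) ∧
      Lop B A phi p ≤ 4 * Lam * ((m : ℝ) + 2 + 2 * n) * sqnorm p.1 ∧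
      (sqnorm p.1 ^ 2 + 16 * sqnorm p.2 < 1 →
        Lop B A phi p ≤ 4 * (((m : ℝ) + 2 * n) + 2) * Lam) := by
  intro p
  have hfor := Lop_phi_eq B hB A hsymm p
  have s0 := sqnorm_nonneg p.1
  have htr := trace_le (A p) Lam (hupper p)
  have hqx := hupper p p.1
  have hqB : ∀ k, quadForm (A p) ((B k).mulVec p.1) ≤ Lam * sqnorm p.1 := by
    intro k
    have := hupper p ((B k).mulVec p.1)
    rwa [sqnorm_mulVec (B k) (hB.2.1 k)] at this
  have hsum : (∑ k, quadForm (A p) ((B k).mulVec p.1)) ≤ n * (Lam * sqnorm p.1) := by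
    calc (∑ k, quadForm (A p) ((B k).mulVec p.1))
        ≤ ∑ _k : Fin n, Lam * sqnorm p.1 := Finset.sum_le_sum fun k _ => hqB k
      _ = n * (Lam * sqnorm p.1) := by simp [Finset.sum_const, mul_comm]
  have hbound : Lop B A phi p ≤ 4 * Lam * ((m : ℝ) + 2 + 2 * n) * sqnorm p.1 := by
    rw [hfor]
    have h1 : 4 * sqnorm p.1 * (A p).trace ≤ 4 * sqnorm p.1 * (m * Lam) := by
      apply mul_le_mul_of_nonneg_left htr; linarith
    nlinarith [hqx, hsum]
  refine ⟨hfor, hbound, fun hball => ?_⟩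
  have hs1 : sqnorm p.1 ≤ 1 := by nlinarith [sqnorm_nonneg p.2]
  have hfac : (0:ℝ) ≤ 4 * Lam * ((m : ℝ) + 2 + 2 * n) := by positivity
  calc Lop B A phi p ≤ 4 * Lam * ((m : ℝ) + 2 + 2 * n) * sqnorm p.1 := hbound
    _ ≤ 4 * Lam * ((m : ℝ) + 2 + 2 * n) * 1 := by
        apply mul_le_mul_of_nonneg_left hs1 hfac
    _ = 4 * (((m : ℝ) + 2 * n) + 2) * Lam := by ring


end
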